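/- Let U' ≤ U be subgroups of G with Z ∩ U ⊆ U', and let W be an A-module with an action σ of U' satisfying σ(u) = ψ(u)^{-1}·id_W for u ∈ U' ∩ Z. Define Ind_{U'}^{U} W to be the A-module of functions θ : U → W with θ(u'u) = σ(u')θ(u) for all u' ∈ U', u ∈ U, with U acting by (u·θ)(x) = θ(xu). Then the map sending F ∈ S_{Ind_{U'}^{U} W, ψ} (formed with respect to the level subgroup U) to the function f : G → W, f(x) = F(x)(1), is an isomorphism of A-modules onto S_{σ,ψ} (formed with respect to the level subgroup U'), with inverse f ↦ F given by F(x)(g) = f(xg^{-1}). -/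

import Mathlib

set_option maxHeartbeats 1000000
set_option synthInstance.maxHeartbeats 400000

noncomputable section

namespace SerreWeightsAux

section RepBasics

variable {k G V : Type*} [CommRing k] [Group G] [AddCommGroup V] [Module k V]

/-- The restriction of a representation to an invariant submodule. -/
def subRep (ρ : Representation k G V) (N : Submodule k V)
    (h : ∀ g : G, ∀ v ∈ N, ρ g v ∈ N) : Representation k G N where
  toFun g := (ρ g).restrict (h g)
  map_one' := by ext v; simp [LinearMap.restrict_apply]
  map_mul' g₁ g₂ := by ext v; simp [LinearMap.restrict_apply]

/-- The right translation representation on functions on the group. -/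
def rtRep (k : Type*) [CommRing k] (G : Type*) [Group G] (M : Type*) [AddCommGroup M]
    [Module k M] : Representation k G (G → M) where
  toFun g :=
    { toFun := fun f x => f (x * g)
      map_add' := fun _ _ => rfl
      map_smul' := fun _ _ => rfl }
  map_one' := by ext f x; simp
  map_mul' g₁ g₂ := by ext f x; simp [mul_assoc]

end RepBasics

variable {G : Type*} [Group G]

section SModDefs

variable (U Z : Subgroup G)
variable (A : Type*) [CommRing A] (W : Type*) [AddCommGroup W] [Module A W]
variable (σ : Representation A U W) (ψ : Z →* Aˣ)

/-- The compatibility between an action `σ` of `U` and a central character `ψ` of `Z`: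
for `u ∈ U ∩ Z`, the automorphism `σ(u)` is multiplication by `ψ(u)⁻¹`. -/
def CharCompat : Prop :=
  ∀ (u : U) (h : (u : G) ∈ Z),
    σ u = (((ψ ⟨(u : G), h⟩)⁻¹ : Aˣ) : A) • LinearMap.id

variable (D : Subgroup G)

/-- The `A`-module `S_{σ,ψ}` of functions `f : G → W` with `f(γgu) = σ(u)⁻¹ f(g)` and
`f(gz) = ψ(z) f(g)` for `γ ∈ D`, `u ∈ U`, `z ∈ Z`. -/
def SMod : Submodule A (G → W) where
  carrier := {f | ∀ (γ : D) (g : G) (u : U) (z : Z),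
    f (↑γ * g * ↑u * ↑z) = (ψ z : A) • σ u⁻¹ (f g)}
  add_mem' := by
    intro f₁ f₂ h₁ h₂ γ g u z
    simp only [Pi.add_apply, h₁ γ g u z, h₂ γ g u z, map_add, smul_add]
  zero_mem' := by
    intro γ g u z
    simp
  smul_mem' := by
    intro c f hf γ g u z
    simp only [Pi.smul_apply, hf γ g u z, map_smul]
    rw [smul_comm]

lemma mem_SMod_iff {f : G → W} :
    f ∈ SMod U Z A W σ ψ D ↔ ∀ (γ : D) (g : G) (u : U) (z : Z),
      f (↑γ * g * ↑u * ↑z) = (ψ z : A) • σ u⁻¹ (f g) :=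
  Iff.rfl

/-- The submodule `W^{(t)}` of vectors fixed (up to the characters) by the elements
`u z ∈ UZ` lying in `t⁻¹ D t`. -/
def Wfix (t : G) : Submodule A W where
  carrier := {w | ∀ (u : U) (z : Z), t * (↑u * ↑z) * t⁻¹ ∈ D →
    σ u⁻¹ ((ψ z : A) • w) = w}
  add_mem' := by
    intro w₁ w₂ h₁ h₂ u z h
    simp only [smul_add, map_add, h₁ u z h, h₂ u z h]
  zero_mem' := by
    intro u z h
    simp
  smul_mem' := by
    intro c w hw u z h
    rw [smul_comm, map_smul, hw u z h]

/-- Evaluation of elements of `S_{σ,ψ}` at a finite family of points of `G`. -/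
def evalMap {I : Type*} (t : I → G) : SMod U Z A W σ ψ D →ₗ[A] (I → W) :=
  LinearMap.pi fun i => (LinearMap.proj (t i)).comp (SMod U Z A W σ ψ D).subtype

/-- The map `S_{σ₁,ψ} → S_{σ₂,ψ}` induced by a `U`-equivariant map `W₁ → W₂`. -/
def SMap {W₁ W₂ : Type*} [AddCommGroup W₁] [Module A W₁] [AddCommGroup W₂] [Module A W₂]
    (σ₁ : Representation A U W₁) (σ₂ : Representation A U W₂)
    (φ : W₁ →ₗ[A] W₂) (hφ : ∀ (u : U) (w : W₁), φ (σ₁ u w) = σ₂ u (φ w)) :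
    SMod U Z A W₁ σ₁ ψ D →ₗ[A] SMod U Z A W₂ σ₂ ψ D where
  toFun f := ⟨fun g => φ (f.1 g), by
    intro γ g u z
    show φ (f.1 (↑γ * g * ↑u * ↑z)) = _
    rw [f.2 γ g u z, map_smul, hφ]⟩
  map_add' f₁ f₂ := Subtype.ext (funext fun g => map_add φ _ _)
  map_smul' c f := Subtype.ext (funext fun g => map_smul φ c _)

end SModDefs

section IndDefs

variable (U' U : Subgroup G) (hUU : U' ≤ U)
variable (A : Type*) [CommRing A] (W : Type*) [AddCommGroup W] [Module A W]
variable (σ : Representation A U' W)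

/-- The module `Ind_{U'}^{U} W` of functions `θ : U → W` with `θ(u'u) = σ(u')θ(u)`. -/
def IndMod : Submodule A (↥U → W) where
  carrier := {θ | ∀ (u' : U') (u : U), θ (Subgroup.inclusion hUU u' * u) = σ u' (θ u)}
  add_mem' := by
    intro θ₁ θ₂ h₁ h₂ u' u
    simp [h₁ u' u, h₂ u' u]
  zero_mem' := by
    intro u' u
    simp
  smul_mem' := by
    intro c θ hθ u' u
    simp [hθ u' u]

/-- The representation of `U` on `Ind_{U'}^{U} W` by right translation. -/
def indRep : Representation A U (IndMod U' U hUU A W σ) :=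
  subRep (rtRep A U W) (IndMod U' U hUU A W σ) (by
    intro g θ hθ u' u
    show θ (Subgroup.inclusion hUU u' * u * g) = _
    rw [mul_assoc]
    exact hθ u' (u * g))

/-- Evaluation at `1 ∈ U` of functions valued in `Ind_{U'}^{U} W`. -/
def evInd : (G → (IndMod U' U hUU A W σ)) →ₗ[A] (G → W) where
  toFun F := fun x => ((F x : ↥U → W) 1)
  map_add' _ _ := rfl
  map_smul' _ _ := rfl

end IndDefs

/-- For `U' ≤ U` with `Z ∩ U ⊆ U'` and `W` a `U'`-module compatible with
`ψ`, the map `F ↦ (x ↦ F(x)(1))` is an isomorphism of `A`-modules from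
`S_{Ind_{U'}^{U} W, ψ}` (formed with level `U`) onto `S_{σ,ψ}` (formed with level `U'`),
with inverse `f ↦ F` given by `F(x)(g) = f(xg⁻¹)`. -/
theorem stmt11 (G : Type) [Group G] (D : Subgroup G) (U' U : Subgroup G) (hUU : U' ≤ U)
    (Z : Subgroup G) (hZ : Z ≤ Subgroup.center G)
    (hZU : ∀ g : G, g ∈ Z → g ∈ U → g ∈ U')
    (A : Type) [CommRing A] (W : Type) [AddCommGroup W] [Module A W]
    (σ : Representation A U' W) (ψ : Z →* Aˣ)
    (hcompat : CharCompat U' Z A W σ ψ) :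
    (∀ F : G → (IndMod U' U hUU A W σ),
      F ∈ SMod U Z A (IndMod U' U hUU A W σ) (indRep U' U hUU A W σ) ψ D →
      evInd U' U hUU A W σ F ∈ SMod U' Z A W σ ψ D) ∧
    (∀ F₁ F₂ : G → (IndMod U' U hUU A W σ),
      F₁ ∈ SMod U Z A (IndMod U' U hUU A W σ) (indRep U' U hUU A W σ) ψ D →
      F₂ ∈ SMod U Z A (IndMod U' U hUU A W σ) (indRep U' U hUU A W σ) ψ D →
      evInd U' U hUU A W σ F₁ = evInd U' U hUU A W σ F₂ → F₁ = F₂) ∧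
    (∀ f ∈ SMod U' Z A W σ ψ D,
      ∃ F ∈ SMod U Z A (IndMod U' U hUU A W σ) (indRep U' U hUU A W σ) ψ D,
        evInd U' U hUU A W σ F = f ∧
        ∀ (x : G) (u : U), ((F x : ↥U → W) u) = f (x * (↑u)⁻¹)) := by
  -- coercion lemmas
  have hrep : ∀ (u : U) (θ : IndMod U' U hUU A W σ) (v : U),
      ((indRep U' U hUU A W σ u θ : IndMod U' U hUU A W σ) : ↥U → W) v
        = (θ : ↥U → W) (v * u) := fun _ _ _ => rfl
  have key : ∀ F : G → (IndMod U' U hUU A W σ),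
      F ∈ SMod U Z A (IndMod U' U hUU A W σ) (indRep U' U hUU A W σ) ψ D →
      ∀ (x : G) (u : U), ((F x : ↥U → W) u)
        = ((F (x * (↑u)⁻¹) : ↥U → W) 1) := by
    intro F hF x u
    have h := hF 1 (x * (↑u)⁻¹) u 1
    have hx : ((1 : D) : G) * (x * (↑u)⁻¹) * ↑u * ((1 : Z) : G) = x := by
      simp only [OneMemClass.coe_one, one_mul, mul_one]
      group
    rw [hx] at h
    have := congrArg (fun θ : IndMod U' U hUU A W σ => (θ : ↥U → W) u) h
    simpa [hrep] using this
  refine ⟨?_, ?_, ?_⟩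
  · -- part 1
    intro F hF γ g u' z
    have h := hF γ g (Subgroup.inclusion hUU u') z
    have h1 := congrArg (fun θ : IndMod U' U hUU A W σ => (θ : ↥U → W) 1) h
    have hc : ((Subgroup.inclusion hUU u' : U) : G) = (u' : G) := rfl
    have h2 : (1 : U) * (Subgroup.inclusion hUU u')⁻¹
        = Subgroup.inclusion hUU u'⁻¹ * 1 := by
      simp [map_inv]
    have h3 := (F g).2 u'⁻¹ 1
    show (F (↑γ * g * ↑u' * ↑z) : ↥U → W) 1 = (ψ z : A) • σ u'⁻¹ ((F g : ↥U → W) 1)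
    rw [← hc]
    calc (F (↑γ * g * ↑(Subgroup.inclusion hUU u') * ↑z) : ↥U → W) 1
        = (ψ z : A) • (F g : ↥U → W) ((1 : U) * (Subgroup.inclusion hUU u')⁻¹) := by
          rw [h1]; rfl
      _ = (ψ z : A) • σ u'⁻¹ ((F g : ↥U → W) 1) := by rw [h2, h3]
  · -- part 2: injectivity
    intro F₁ F₂ h₁ h₂ hev
    funext x
    apply Subtype.ext
    funext u
    rw [key F₁ h₁ x u, key F₂ h₂ x u]
    exact congrFun hev (x * (↑u)⁻¹)
  · -- part 3: surjectivity
    intro f hf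
    have hmem : ∀ x : G, (fun u : U => f (x * (↑u)⁻¹)) ∈ IndMod U' U hUU A W σ := by
      intro x u' u
      have h := hf 1 (x * (↑u)⁻¹) u'⁻¹ 1
      simp only [Subgroup.coe_one, one_mul, OneMemClass.coe_one, mul_one, map_one,
        Units.val_one, inv_inv, one_smul, InvMemClass.coe_inv] at h
      have hcoe : ((Subgroup.inclusion hUU u' * u : U) : G) = (u' : G) * (u : G) := rfl
      show f (x * ((Subgroup.inclusion hUU u' * u : U) : G)⁻¹) = σ u' (f (x * (↑u)⁻¹))
      rw [hcoe, mul_inv_rev, ← mul_assoc]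
      exact h
    refine ⟨fun x => ⟨fun u => f (x * (↑u)⁻¹), hmem x⟩, ?_, ?_, fun x u => rfl⟩
    · intro γ g u z
      apply Subtype.ext
      funext v
      show f (↑γ * g * ↑u * ↑z * (↑v)⁻¹)
        = (ψ z : A) • (indRep U' U hUU A W σ u⁻¹ ⟨fun w => f (g * (↑w)⁻¹), hmem g⟩
            : ↥U → W) v
      rw [hrep]
      show _ = (ψ z : A) • f (g * ((v * u⁻¹ : U) : G)⁻¹)
      have hz : (↑γ : G) * g * ↑u * ↑z * (↑v)⁻¹
          = ↑γ * (g * ↑u * (↑v)⁻¹) * ((1 : U') : G) * ↑z := by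
        have hc := (hZ z.2).comm ((v : G)⁻¹)
        simp only [OneMemClass.coe_one, mul_one]
        rw [mul_assoc (↑γ * g * ↑u) (↑z) ((↑v)⁻¹), hc]
        group
      rw [hz]
      have h := hf γ (g * ↑u * (↑v)⁻¹) 1 z
      simp only [inv_one, map_one, LinearMap.id_coe, id_eq, Module.End.one_apply] at h
      rw [h]
      congr 1
      simp [mul_inv_rev, mul_assoc]
    · funext x
      show f (x * ((1 : U) : G)⁻¹) = f x
      simp

end SerreWeightsAux
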